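/- (Zero-one law for non-i.i.d. random variables) Let Γ be a countable set, M a measurable space, and X = (X_k)_{k∈Γ} a family of random variables with values in M. Let E ⊆ M^Γ be a measurable event, and suppose that for every finite set J ⊆ Γ, every measurable map φ : M^J → Σ into a finite set Σ, and every ε, δ > 0, the event E has a positional symmetry π : Γ → Γ such that (i) the random variables φ(X_J) and φ(X^π_J) are ε-dependent, and (ii) the distributions of X = (X_k)_{k∈Γ} and X^π = (X_{π(k)})_{k∈Γ} satisfy ‖law(X) − law(X^π)‖_TV < δ. Then P(X ∈ E) ∈ {0, 1}. -/

import Mathlib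

open MeasureTheory ProbabilityTheory

/-- The total variation distance `sup_A |μ(A) - ν(A)|` between two measures,
the supremum ranging over measurable sets. -/
noncomputable def tvDist {X : Type*} [MeasurableSpace X] (μ ν : Measure X) : ℝ :=
  ⨆ A : {A : Set X // MeasurableSet A}, |(μ A).toReal - (ν A).toReal|

open scoped symmDiff in
lemma tvDist_bound {X : Type*} [MeasurableSpace X] (μ ν : Measure X)
    [IsProbabilityMeasure μ] [IsProbabilityMeasure ν] {S : Set X} (hS : MeasurableSet S) :
    |(μ S).toReal - (ν S).toReal| ≤ tvDist μ ν := by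
  have hbdd : BddAbove (Set.range fun A : {A : Set X // MeasurableSet A} =>
      |(μ A).toReal - (ν A).toReal|) := by
    refine ⟨2, ?_⟩
    rintro x ⟨A, rfl⟩
    have h1 : (μ (A : Set X)).toReal ≤ 1 := by
      simpa using ENNReal.toReal_mono ENNReal.one_ne_top (prob_le_one (μ := μ))
    have h2 : (ν (A : Set X)).toReal ≤ 1 := by
      simpa using ENNReal.toReal_mono ENNReal.one_ne_top (prob_le_one (μ := ν))
    have h3 : (0:ℝ) ≤ (μ (A : Set X)).toReal := ENNReal.toReal_nonneg
    have h4 : (0:ℝ) ≤ (ν (A : Set X)).toReal := ENNReal.toReal_nonneg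
    rw [abs_le]
    constructor <;> linarith
  exact le_ciSup hbdd ⟨S, hS⟩

open scoped symmDiff in
lemma symmDiff_inter_subset {X : Type*} (A B A' B' : Set X) :
    (A ∩ B) ∆ (A' ∩ B') ⊆ (A ∆ A') ∪ (B ∆ B') := by
  intro x hx
  simp only [Set.mem_symmDiff, Set.mem_union, Set.mem_inter_iff] at hx ⊢
  tauto

open scoped symmDiff in
/-- **Zero-one law for non-i.i.d. random variables.**
Suppose that for every finite `J ⊆ Γ`, every finitary observable `φ : M^J → Σ`
(a measurable map into a finite set), and every `ε, δ > 0`, the event `E` has a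
positional symmetry `π` such that (i) `φ(X_J)` and `φ(X^π_J)` are `ε`-dependent, and
(ii) the distributions of `X` and `X^π` are `δ`-close in total variation.
Then `P(X ∈ E) ∈ {0,1}`. -/
theorem non_iid_zero_one_law
    {Ω M Γ : Type*} [MeasurableSpace Ω] [MeasurableSpace M] [Countable Γ]
    (Pr : Measure Ω) [IsProbabilityMeasure Pr]
    (X : Γ → Ω → M) (hmeas : ∀ k, Measurable (X k))
    (E : Set (Γ → M)) (hE : MeasurableSet E)
    (hsym : ∀ (J : Finset Γ) (Sig : Type) (_ : Fintype Sig) (_ : MeasurableSpace Sig)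
      (φ : ((j : J) → M) → Sig), Measurable φ → ∀ ε δ : ℝ, 0 < ε → 0 < δ →
      ∃ π : Γ → Γ,
        (∀ a : Γ → M, a ∈ E ↔ (fun k => a (π k)) ∈ E) ∧
        (∀ A B : Set Sig, MeasurableSet A → MeasurableSet B →
          |(Pr {ω | φ (fun j : J => X j ω) ∈ A ∧ φ (fun j : J => X (π j) ω) ∈ B}).toReal -
            (Pr {ω | φ (fun j : J => X j ω) ∈ A}).toReal *
              (Pr {ω | φ (fun j : J => X (π j) ω) ∈ B}).toReal| < ε) ∧
        tvDist (Measure.map (fun ω (k : Γ) => X k ω) Pr)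
          (Measure.map (fun ω (k : Γ) => X (π k) ω) Pr) < δ) :
    Pr {ω | (fun k => X k ω) ∈ E} = 0 ∨ Pr {ω | (fun k => X k ω) ∈ E} = 1 := by
  classical
  have hX : Measurable (fun ω (k : Γ) => X k ω) := measurable_pi_lambda _ hmeas
  set ν : Measure (Γ → M) := Measure.map (fun ω (k : Γ) => X k ω) Pr with hνdef
  have hνprob : IsProbabilityMeasure ν := Measure.isProbabilityMeasure_map hX.aemeasurable
  set p : ℝ := (ν E).toReal with hpdef
  -- the key estimate
  have hmain : ∀ η : ℝ, 0 < η → |p - p * p| ≤ 7 * η := by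
    intro η hη
    -- approximate E by a measurable cylinder
    have halg : IsSetAlgebra (measurableCylinders (fun _ : Γ => M)) :=
      ⟨empty_mem_measurableCylinders _, fun _ hs => compl_mem_measurableCylinders hs,
       fun _ _ hs ht => union_mem_measurableCylinders hs ht⟩
    have hdense := Measure.MeasureDense.of_generateFrom_isSetAlgebra_finite (μ := ν) halg
      generateFrom_measurableCylinders.symm
    obtain ⟨C, hCmem, hCsd⟩ := hdense.approx E hE (measure_ne_top ν E) η hη
    have hC : MeasurableSet C := MeasurableSet.of_mem_measurableCylinders hCmem
    obtain ⟨J, F, hF, hCF⟩ := (mem_measurableCylinders C).mp hCmem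
    -- the observable
    set φ : ((j : J) → M) → Bool := fun x => decide (x ∈ F) with hφdef
    have hφ : Measurable φ := by
      apply measurable_to_bool
      have : φ ⁻¹' {true} = F := by
        ext x; simp [hφdef]
      rw [this]; exact hF
    obtain ⟨π, hπE, hdep, htv⟩ := hsym J Bool inferInstance inferInstance φ hφ η η hη hη
    have hY : Measurable (fun ω (k : Γ) => X (π k) ω) :=
      measurable_pi_lambda _ (fun k => hmeas (π k))
    set ν' : Measure (Γ → M) := Measure.map (fun ω (k : Γ) => X (π k) ω) Pr with hν'def
    have hν'prob : IsProbabilityMeasure ν' := Measure.isProbabilityMeasure_map hY.aemeasurable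
    -- basic quantities
    set a : ℝ := (ν C).toReal with hadef
    set b : ℝ := (ν' C).toReal with hbdef
    -- bounds 0 ≤ a,b,p ≤ 1
    have hp0 : (0:ℝ) ≤ p := ENNReal.toReal_nonneg
    have hp1 : p ≤ 1 := by
      simpa [hpdef] using ENNReal.toReal_mono ENNReal.one_ne_top (prob_le_one (μ := ν) (s := E))
    have ha0 : (0:ℝ) ≤ a := ENNReal.toReal_nonneg
    have ha1 : a ≤ 1 := by
      simpa [hadef] using ENNReal.toReal_mono ENNReal.one_ne_top (prob_le_one (μ := ν) (s := C))
    have hb0 : (0:ℝ) ≤ b := ENNReal.toReal_nonneg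
    have hb1 : b ≤ 1 := by
      simpa [hbdef] using ENNReal.toReal_mono ENNReal.one_ne_top (prob_le_one (μ := ν') (s := C))
    -- symmetric difference bounds
    have hsd_real : (ν (E ∆ C)).toReal < η := by
      rw [← ENNReal.ofReal_toReal (measure_ne_top ν (E ∆ C))] at hCsd
      exact (ENNReal.ofReal_lt_ofReal_iff hη).mp hCsd
    have hsd'_real : (ν' (E ∆ C)).toReal < 2 * η := by
      have := tvDist_bound ν ν' (hE.symmDiff hC)
      have h2 : |(ν (E ∆ C)).toReal - (ν' (E ∆ C)).toReal| < η := lt_of_le_of_lt this htv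
      rw [abs_sub_comm, abs_lt] at h2
      linarith
    -- |p - a| ≤ (ν (E ∆ C)).toReal
    have hpa : |p - a| < η := by
      refine lt_of_le_of_lt ?_ hsd_real
      exact abs_measureReal_sub_le_measureReal_symmDiff hE.nullMeasurableSet hC.nullMeasurableSet
    -- |a - b| < η
    have hab : |a - b| < η := lt_of_le_of_lt (tvDist_bound ν ν' hC) htv
    -- event sets in Ω
    have hXE : {ω | (fun k => X k ω) ∈ E} = (fun ω (k : Γ) => X k ω) ⁻¹' E := rfl
    have hYE : {ω | (fun k => X k ω) ∈ E} = (fun ω (k : Γ) => X (π k) ω) ⁻¹' E := by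
      ext ω
      exact hπE (fun k => X k ω)
    -- relate the φ-events with the cylinder C
    have hCset : C = Finset.restrict J ⁻¹' F := by rw [hCF]; rfl
    have hSX : {ω | φ (fun j : J => X j ω) ∈ ({true} : Set Bool)}
        = (fun ω (k : Γ) => X k ω) ⁻¹' C := by
      ext ω
      simp only [hφdef, hCset, Set.mem_setOf_eq, Set.mem_preimage, Set.mem_singleton_iff,
        decide_eq_true_eq]
      exact Iff.rfl
    have hSY : {ω | φ (fun j : J => X (π j) ω) ∈ ({true} : Set Bool)}
        = (fun ω (k : Γ) => X (π k) ω) ⁻¹' C := by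
      ext ω
      simp only [hφdef, hCset, Set.mem_setOf_eq, Set.mem_preimage, Set.mem_singleton_iff,
        decide_eq_true_eq]
      exact Iff.rfl
    have hSXY : {ω | φ (fun j : J => X j ω) ∈ ({true} : Set Bool) ∧
        φ (fun j : J => X (π j) ω) ∈ ({true} : Set Bool)}
        = ((fun ω (k : Γ) => X k ω) ⁻¹' C) ∩ ((fun ω (k : Γ) => X (π k) ω) ⁻¹' C) := by
      ext ω
      have h1 := Set.ext_iff.mp hSX ω
      have h2 := Set.ext_iff.mp hSY ω
      simp only [Set.mem_setOf_eq] at h1 h2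
      simp only [Set.mem_setOf_eq, Set.mem_inter_iff, h1, h2]
    -- independence estimate
    have hdep' := hdep {true} {true} (measurableSet_singleton true) (measurableSet_singleton true)
    rw [hSX, hSY, hSXY] at hdep'
    have hmapC : Pr ((fun ω (k : Γ) => X k ω) ⁻¹' C) = ν C := (Measure.map_apply hX hC).symm
    have hmapC' : Pr ((fun ω (k : Γ) => X (π k) ω) ⁻¹' C) = ν' C := (Measure.map_apply hY hC).symm
    rw [hmapC, hmapC'] at hdep'
    set r : ℝ := (Pr (((fun ω (k : Γ) => X k ω) ⁻¹' C) ∩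
      ((fun ω (k : Γ) => X (π k) ω) ⁻¹' C))).toReal with hrdef
    have hrab : |r - a * b| < η := hdep'
    -- relate p with r : p = Pr(X∈E ∩ Y∈E) and approximate by cylinders
    have hpset : {ω | (fun k => X k ω) ∈ E}
        = ((fun ω (k : Γ) => X k ω) ⁻¹' E) ∩ ((fun ω (k : Γ) => X (π k) ω) ⁻¹' E) := by
      rw [← hXE, ← hYE, Set.inter_self]
    have hpPr : p = (Pr (((fun ω (k : Γ) => X k ω) ⁻¹' E) ∩
        ((fun ω (k : Γ) => X (π k) ω) ⁻¹' E))).toReal := by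
      rw [← hpset, hXE, hpdef, hνdef, Measure.map_apply hX hE]
    -- symmetric difference of the two intersections
    have hsub : (((fun ω (k : Γ) => X k ω) ⁻¹' E) ∩ ((fun ω (k : Γ) => X (π k) ω) ⁻¹' E)) ∆
        (((fun ω (k : Γ) => X k ω) ⁻¹' C) ∩ ((fun ω (k : Γ) => X (π k) ω) ⁻¹' C)) ⊆
        ((fun ω (k : Γ) => X k ω) ⁻¹' (E ∆ C)) ∪ ((fun ω (k : Γ) => X (π k) ω) ⁻¹' (E ∆ C)) := by
      rw [Set.preimage_symmDiff, Set.preimage_symmDiff]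
      exact symmDiff_inter_subset _ _ _ _
    have hpr : |p - r| ≤ 3 * η := by
      have hEC : MeasurableSet (E ∆ C) := hE.symmDiff hC
      have hmE : MeasurableSet (((fun ω (k : Γ) => X k ω) ⁻¹' E) ∩
          ((fun ω (k : Γ) => X (π k) ω) ⁻¹' E)) := (hX hE).inter (hY hE)
      have hmC : MeasurableSet (((fun ω (k : Γ) => X k ω) ⁻¹' C) ∩
          ((fun ω (k : Γ) => X (π k) ω) ⁻¹' C)) := (hX hC).inter (hY hC)
      have habs : |p - r| ≤ (Pr ((((fun ω (k : Γ) => X k ω) ⁻¹' E) ∩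
          ((fun ω (k : Γ) => X (π k) ω) ⁻¹' E)) ∆
          (((fun ω (k : Γ) => X k ω) ⁻¹' C) ∩
          ((fun ω (k : Γ) => X (π k) ω) ⁻¹' C)))).toReal := by
        rw [hpPr, hrdef]
        exact abs_measureReal_sub_le_measureReal_symmDiff hmE.nullMeasurableSet
          hmC.nullMeasurableSet
      have hle : (Pr ((((fun ω (k : Γ) => X k ω) ⁻¹' E) ∩
          ((fun ω (k : Γ) => X (π k) ω) ⁻¹' E)) ∆
          (((fun ω (k : Γ) => X k ω) ⁻¹' C) ∩
          ((fun ω (k : Γ) => X (π k) ω) ⁻¹' C)))).toReal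
          ≤ (ν (E ∆ C)).toReal + (ν' (E ∆ C)).toReal := by
        have h1 : Pr ((((fun ω (k : Γ) => X k ω) ⁻¹' E) ∩
            ((fun ω (k : Γ) => X (π k) ω) ⁻¹' E)) ∆
            (((fun ω (k : Γ) => X k ω) ⁻¹' C) ∩
            ((fun ω (k : Γ) => X (π k) ω) ⁻¹' C)))
            ≤ Pr ((fun ω (k : Γ) => X k ω) ⁻¹' (E ∆ C))
              + Pr ((fun ω (k : Γ) => X (π k) ω) ⁻¹' (E ∆ C)) :=
          le_trans (measure_mono hsub) (measure_union_le _ _)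
        have h2 : Pr ((fun ω (k : Γ) => X k ω) ⁻¹' (E ∆ C)) = ν (E ∆ C) :=
          (Measure.map_apply hX hEC).symm
        have h3 : Pr ((fun ω (k : Γ) => X (π k) ω) ⁻¹' (E ∆ C)) = ν' (E ∆ C) :=
          (Measure.map_apply hY hEC).symm
        rw [h2, h3] at h1
        calc (Pr _).toReal ≤ (ν (E ∆ C) + ν' (E ∆ C)).toReal :=
              ENNReal.toReal_mono (by finiteness) h1
          _ = (ν (E ∆ C)).toReal + (ν' (E ∆ C)).toReal :=
              ENNReal.toReal_add (measure_ne_top _ _) (measure_ne_top _ _)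
      linarith [habs, hle, hsd_real, hsd'_real]
    -- combine everything
    have habp : |a * b - p * p| ≤ |a - p| + |b - p| := by
      have hid : a * b - p * p = (a - p) * b + p * (b - p) := by ring
      calc |a * b - p * p| = |(a - p) * b + p * (b - p)| := by rw [hid]
        _ ≤ |(a - p) * b| + |p * (b - p)| := abs_add_le _ _
        _ = |a - p| * |b| + |p| * |b - p| := by rw [abs_mul, abs_mul]
        _ ≤ |a - p| + |b - p| := by
            have hb' : |b| ≤ 1 := by rw [abs_of_nonneg hb0]; exact hb1
            have hp' : |p| ≤ 1 := by rw [abs_of_nonneg hp0]; exact hp1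
            have t1 : |a - p| * |b| ≤ |a - p| * 1 :=
              mul_le_mul_of_nonneg_left hb' (abs_nonneg (a - p))
            have t2 : |p| * |b - p| ≤ 1 * |b - p| :=
              mul_le_mul_of_nonneg_right hp' (abs_nonneg (b - p))
            nlinarith [abs_nonneg (a - p), abs_nonneg (b - p)]
    have hbp : |b - p| ≤ 2 * η := by
      have : |b - p| ≤ |b - a| + |a - p| := abs_sub_le _ _ _
      rw [abs_sub_comm b a] at this
      rw [abs_sub_comm a p] at this
      linarith [hab.le, hpa.le]
    have hap : |a - p| ≤ η := by rw [abs_sub_comm]; exact hpa.le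
    have t1 : |p - p * p| ≤ |p - a * b| + |a * b - p * p| := abs_sub_le _ _ _
    have t2 : |p - a * b| ≤ |p - r| + |r - a * b| := abs_sub_le _ _ _
    linarith [hpr, hrab.le, habp, hbp, hap, t1, t2]
  -- conclude p = p^2
  have hpp : p = p * p := by
    by_contra h
    have habs : 0 < |p - p * p| := abs_pos.mpr (sub_ne_zero.mpr h)
    have := hmain (|p - p * p| / 14) (by positivity)
    linarith
  have hPrE : Pr {ω | (fun k => X k ω) ∈ E} = ν E := (Measure.map_apply hX hE).symm
  have hp01 : p = 0 ∨ p = 1 := by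
    have h0 : p * (1 - p) = 0 := by nlinarith [hpp]
    rcases mul_eq_zero.mp h0 with h | h
    · exact Or.inl h
    · exact Or.inr (by linarith)
  rcases hp01 with h | h
  · left
    rw [hPrE]
    have := (ENNReal.toReal_eq_zero_iff (ν E)).mp h
    rcases this with h' | h'
    · exact h'
    · exact absurd h' (measure_ne_top ν E)
  · right
    rw [hPrE]
    exact (ENNReal.toReal_eq_one_iff (ν E)).mp h
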